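/- For π ∈ OP(n,k), let π^c ∈ OP(n,k) be the complemented partition obtained by replacing each letter i by n+1−i in every block (keeping the block order). Then rcb(π^c) = ros(π) and rcs(π^c) = rob(π). -/

import Mathlib

/-- Ordered partitions of `{1,…,n}` (encoded as `Fin n`) into `k` blocks: sequences
`(B_1,…,B_k)` of pairwise disjoint nonempty subsets whose union is everything, i.e.
every letter lies in exactly one block. -/
def OP (n k : ℕ) : Finset (Fin k → Finset (Fin n)) :=
  Finset.univ.filter fun B =>
    (∀ j, (B j).Nonempty) ∧ ∀ x : Fin n, ∃ j, x ∈ B j ∧ ∀ j', x ∈ B j' → j' = j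

/-- `ros(π)`: the number of pairs `(i,j)` of letters with `j < i`, `j` the opener
(least element) of its block, and the block of `j` strictly to the right of the
block of `i`. -/
def ros {n k : ℕ} (B : Fin k → Finset (Fin n)) : ℕ :=
  ((Finset.univ : Finset (Fin n × Fin n)).filter fun ij =>
    ij.2 < ij.1 ∧ ∃ a b : Fin k, ij.1 ∈ B a ∧ ij.2 ∈ B b ∧ (B b).min = ↑ij.2 ∧ a < b).card

/-- `rcb(π)`: pairs `(i,j)` with `j > i`, `j` the closer (greatest element) of its block,
and the block of `j` strictly to the right of the block of `i`. -/
def rcb {n k : ℕ} (B : Fin k → Finset (Fin n)) : ℕ :=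
  ((Finset.univ : Finset (Fin n × Fin n)).filter fun ij =>
    ij.1 < ij.2 ∧ ∃ a b : Fin k, ij.1 ∈ B a ∧ ij.2 ∈ B b ∧ (B b).max = ↑ij.2 ∧ a < b).card

/-- `los(π)`: pairs `(i,j)` with `j < i`, `j` the opener of its block, and the block of
`j` strictly to the left of the block of `i`. -/
def los {n k : ℕ} (B : Fin k → Finset (Fin n)) : ℕ :=
  ((Finset.univ : Finset (Fin n × Fin n)).filter fun ij =>
    ij.2 < ij.1 ∧ ∃ a b : Fin k, ij.1 ∈ B a ∧ ij.2 ∈ B b ∧ (B b).min = ↑ij.2 ∧ b < a).card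

/-- `lcb(π)`: pairs `(i,j)` with `j > i`, `j` the closer of its block, and the block of
`j` strictly to the left of the block of `i`. -/
def lcb {n k : ℕ} (B : Fin k → Finset (Fin n)) : ℕ :=
  ((Finset.univ : Finset (Fin n × Fin n)).filter fun ij =>
    ij.1 < ij.2 ∧ ∃ a b : Fin k, ij.1 ∈ B a ∧ ij.2 ∈ B b ∧ (B b).max = ↑ij.2 ∧ b < a).card

/-- `rob(π)`: pairs `(i,j)` with `j > i`, `j` the opener of its block, and the block of
`j` strictly to the right of the block of `i`. -/
def rob {n k : ℕ} (B : Fin k → Finset (Fin n)) : ℕ :=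
  ((Finset.univ : Finset (Fin n × Fin n)).filter fun ij =>
    ij.1 < ij.2 ∧ ∃ a b : Fin k, ij.1 ∈ B a ∧ ij.2 ∈ B b ∧ (B b).min = ↑ij.2 ∧ a < b).card

/-- `rcs(π)`: pairs `(i,j)` with `j < i`, `j` the closer of its block, and the block of
`j` strictly to the right of the block of `i`. -/
def rcs {n k : ℕ} (B : Fin k → Finset (Fin n)) : ℕ :=
  ((Finset.univ : Finset (Fin n × Fin n)).filter fun ij =>
    ij.2 < ij.1 ∧ ∃ a b : Fin k, ij.1 ∈ B a ∧ ij.2 ∈ B b ∧ (B b).max = ↑ij.2 ∧ a < b).card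

/-- The complement `π^c` of `π`: each letter `i` is replaced by `n+1-i`
(for `Fin n`, the map `Fin.rev`), keeping the block order. -/
def complOP {n k : ℕ} (B : Fin k → Finset (Fin n)) : Fin k → Finset (Fin n) :=
  fun j => (B j).image Fin.rev

/-- For every `π ∈ OP(n,k)`: `rcb(π^c) = ros(π)` and `rcs(π^c) = rob(π)`. -/

lemma mem_image_rev {n : ℕ} {s : Finset (Fin n)} {x : Fin n} :
    x ∈ s.image Fin.rev ↔ x.rev ∈ s := by
  simp only [Finset.mem_image]
  constructor
  · rintro ⟨y, hy, rfl⟩; simpa using hy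
  · intro h; exact ⟨x.rev, h, by simp⟩

lemma image_rev_max_eq {n : ℕ} {s : Finset (Fin n)} {j : Fin n} :
    (s.image Fin.rev).max = ↑j ↔ s.min = ↑(j.rev) := by
  constructor
  · intro h
    have hj : j.rev ∈ s := mem_image_rev.mp (Finset.mem_of_max h)
    refine le_antisymm (Finset.min_le hj) (Finset.le_min ?_)
    intro y hy
    have hyr : y.rev ≤ j :=
      Finset.le_max_of_eq (mem_image_rev.mpr (by rwa [Fin.rev_rev])) h
    simpa using Fin.rev_le_rev.mpr hyr
  · intro h
    have hj : j ∈ s.image Fin.rev := mem_image_rev.mpr (Finset.mem_of_min h)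
    refine le_antisymm (Finset.max_le ?_) (Finset.le_max hj)
    intro y hy
    have hyr : j.rev ≤ y.rev := Finset.min_le_of_eq (mem_image_rev.mp hy) h
    simpa using Fin.rev_le_rev.mp hyr

theorem compl_statistics (n k : ℕ) (B : Fin k → Finset (Fin n)) (hB : B ∈ OP n k) :
    rcb (complOP B) = ros B ∧ rcs (complOP B) = rob B := by
  constructor
  · refine Finset.card_bij' (fun p _ => (p.1.rev, p.2.rev)) (fun p _ => (p.1.rev, p.2.rev))
      ?_ ?_ ?_ ?_
    · intro p hp
      simp only [Finset.mem_filter, Finset.mem_univ, true_and] at hp ⊢; simp only [complOP] at hp ⊢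
      obtain ⟨hlt, a, b, h1, h2, h3, h4⟩ := hp
      exact ⟨Fin.rev_lt_rev.mpr hlt, a, b, mem_image_rev.mp h1, mem_image_rev.mp h2,
        image_rev_max_eq.mp h3, h4⟩
    · intro p hp
      simp only [Finset.mem_filter, Finset.mem_univ, true_and] at hp ⊢; simp only [complOP] at hp ⊢
      obtain ⟨hlt, a, b, h1, h2, h3, h4⟩ := hp
      exact ⟨Fin.rev_lt_rev.mpr hlt, a, b, mem_image_rev.mpr (by rwa [Fin.rev_rev]),
        mem_image_rev.mpr (by rwa [Fin.rev_rev]), image_rev_max_eq.mpr (by rwa [Fin.rev_rev]), h4⟩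
    · intro p _; simp [Fin.rev_rev]
    · intro p _; simp [Fin.rev_rev]
  · refine Finset.card_bij' (fun p _ => (p.1.rev, p.2.rev)) (fun p _ => (p.1.rev, p.2.rev))
      ?_ ?_ ?_ ?_
    · intro p hp
      simp only [Finset.mem_filter, Finset.mem_univ, true_and] at hp ⊢; simp only [complOP] at hp ⊢
      obtain ⟨hlt, a, b, h1, h2, h3, h4⟩ := hp
      exact ⟨Fin.rev_lt_rev.mpr hlt, a, b, mem_image_rev.mp h1, mem_image_rev.mp h2,
        image_rev_max_eq.mp h3, h4⟩
    · intro p hp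
      simp only [Finset.mem_filter, Finset.mem_univ, true_and] at hp ⊢; simp only [complOP] at hp ⊢
      obtain ⟨hlt, a, b, h1, h2, h3, h4⟩ := hp
      exact ⟨Fin.rev_lt_rev.mpr hlt, a, b, mem_image_rev.mpr (by rwa [Fin.rev_rev]),
        mem_image_rev.mpr (by rwa [Fin.rev_rev]), image_rev_max_eq.mpr (by rwa [Fin.rev_rev]), h4⟩
    · intro p _; simp [Fin.rev_rev]
    · intro p _; simp [Fin.rev_rev]
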